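/- Let f : F₂' → ℤ be a signed-area homomorphism. Let z ∈ F₂ and set k = exp_x(z) and l = exp_y(z), so that y^{-l} x^{-k} z ∈ F₂'. Then z is a product of cubes in F₂ — i.e. z = u₁³ u₂³ ⋯ u_s³ for some s ≥ 1 and u₁, …, u_s ∈ F₂ — if and only if 3 divides k, 3 divides l, and 3 divides f(y^{-l} x^{-k} z). -/

import Mathlib

open scoped commutatorElement

/-- Heisenberg group over a commutative ring. -/
@[ext] structure Heis (R : Type) [CommRing R] where
  a : R
  b : R
  c : R

namespace Heis
variable {R : Type} [CommRing R]

instance : Mul (Heis R) := ⟨fun g h => ⟨g.a + h.a, g.b + h.b, g.c + h.c + g.a * h.b⟩⟩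
instance : One (Heis R) := ⟨⟨0, 0, 0⟩⟩
instance : Inv (Heis R) := ⟨fun g => ⟨-g.a, -g.b, -g.c + g.a * g.b⟩⟩

@[simp] lemma mul_a (g h : Heis R) : (g * h).a = g.a + h.a := rfl
@[simp] lemma mul_b (g h : Heis R) : (g * h).b = g.b + h.b := rfl
@[simp] lemma mul_c (g h : Heis R) : (g * h).c = g.c + h.c + g.a * h.b := rfl
@[simp] lemma one_a : (1 : Heis R).a = 0 := rfl
@[simp] lemma one_b : (1 : Heis R).b = 0 := rfl
@[simp] lemma one_c : (1 : Heis R).c = 0 := rfl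
@[simp] lemma inv_a (g : Heis R) : (g⁻¹).a = -g.a := rfl
@[simp] lemma inv_b (g : Heis R) : (g⁻¹).b = -g.b := rfl
@[simp] lemma inv_c (g : Heis R) : (g⁻¹).c = -g.c + g.a * g.b := rfl

instance : Group (Heis R) where
  mul_assoc g h k := by ext <;> simp <;> ring
  one_mul g := by ext <;> simp
  mul_one g := by ext <;> simp
  inv_mul_cancel g := by ext <;> simp <;> ring

lemma cube (g : Heis R) : g ^ 3 = ⟨3 * g.a, 3 * g.b, 3 * g.c + 3 * (g.a * g.b)⟩ := by
  rw [pow_succ, pow_succ, pow_one]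
  ext <;> simp <;> ring

lemma X_zpow (n : ℤ) : (⟨1,0,0⟩ : Heis R) ^ n = ⟨n, 0, 0⟩ := by
  induction n using Int.induction_on with
  | zero => ext <;> simp
  | succ k ih => rw [zpow_add_one, ih]; ext <;> simp
  | pred k ih => rw [zpow_sub_one, ih]; ext <;> simp <;> push_cast <;> ring

lemma Y_zpow (n : ℤ) : (⟨0,1,0⟩ : Heis R) ^ n = ⟨0, n, 0⟩ := by
  induction n using Int.induction_on with
  | zero => ext <;> simp
  | succ k ih => rw [zpow_add_one, ih]; ext <;> simp
  | pred k ih => rw [zpow_sub_one, ih]; ext <;> simp <;> push_cast <;> ring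

lemma C_zpow (n : ℤ) : (⟨0,0,1⟩ : Heis R) ^ n = ⟨0, 0, n⟩ := by
  induction n using Int.induction_on with
  | zero => ext <;> simp
  | succ k ih => rw [zpow_add_one, ih]; ext <;> simp
  | pred k ih => rw [zpow_sub_one, ih]; ext <;> simp <;> push_cast <;> ring

lemma conj_C (g : Heis R) : g * ⟨0,0,1⟩ * g⁻¹ = ⟨0,0,1⟩ := by
  ext <;> simp <;> ring

lemma commutator_XY : ⁅(⟨1,0,0⟩ : Heis R), (⟨0,1,0⟩ : Heis R)⁆ = ⟨0,0,1⟩ := by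
  show (⟨1,0,0⟩ : Heis R) * ⟨0,1,0⟩ * (⟨1,0,0⟩ : Heis R)⁻¹ * (⟨0,1,0⟩ : Heis R)⁻¹ = _
  ext <;> simp

/-- reduction mod 3 -/
def toZMod3 : Heis ℤ →* Heis (ZMod 3) where
  toFun g := ⟨(g.a : ZMod 3), (g.b : ZMod 3), (g.c : ZMod 3)⟩
  map_one' := by ext <;> simp
  map_mul' g h := by ext <;> push_cast <;> simp

lemma exponent3 (g : Heis (ZMod 3)) : g ^ 3 = 1 := by
  have h3 : (3 : ZMod 3) = 0 := by decide
  rw [cube]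
  ext <;> simp [h3]

end Heis

section Engel
variable {G : Type*} [Group G]

lemma key_exp3 (h3 : ∀ g : G, g ^ 3 = 1) (a b : G) : b * a * b = a⁻¹ * b⁻¹ * a⁻¹ := by
  have h := h3 (a * b)
  rw [pow_succ, pow_succ, pow_one] at h
  calc b * a * b = a⁻¹ * (a * b * (a * b) * (a * b)) * (b⁻¹ * a⁻¹) := by group
    _ = a⁻¹ * b⁻¹ * a⁻¹ := by rw [h]; group

lemma sq_exp3 (h3 : ∀ g : G, g ^ 3 = 1) (a : G) : a * a = a⁻¹ := by
  have h := h3 a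
  rw [pow_succ, pow_succ, pow_one] at h
  calc a * a = a⁻¹ * (a * a * a) := by group
    _ = a⁻¹ := by rw [h]; group

lemma engel_exp3 (h3 : ∀ g : G, g ^ 3 = 1) (a b : G) : Commute a ⁅a, b⁆ := by
  have key := key_exp3 h3
  have sq := sq_exp3 h3
  show a * ⁅a, b⁆ = ⁅a, b⁆ * a
  rw [commutatorElement_def]
  have L : a * (a * b * a⁻¹ * b⁻¹) = b⁻¹ * a * b := by
    calc a * (a * b * a⁻¹ * b⁻¹) = (a * a) * b * a⁻¹ * b⁻¹ := by group
      _ = a⁻¹ * b * a⁻¹ * b⁻¹ := by rw [sq a]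
      _ = (a⁻¹ * (b⁻¹)⁻¹ * a⁻¹) * b⁻¹ := by group
      _ = (b⁻¹ * a * b⁻¹) * b⁻¹ := by rw [← key a b⁻¹]
      _ = b⁻¹ * a * (b * b)⁻¹ := by group
      _ = b⁻¹ * a * (b⁻¹)⁻¹ := by rw [sq b]
      _ = b⁻¹ * a * b := by group
  have R : (a * b * a⁻¹ * b⁻¹) * a = b⁻¹ * a * b := by
    calc (a * b * a⁻¹ * b⁻¹) * a = (a * b * a) * a⁻¹ * a⁻¹ * b⁻¹ * a := by group
      _ = (b⁻¹ * a⁻¹ * b⁻¹) * a⁻¹ * a⁻¹ * b⁻¹ * a := by rw [key b a]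
      _ = b⁻¹ * a⁻¹ * b⁻¹ * (a * a)⁻¹ * b⁻¹ * a := by group
      _ = b⁻¹ * a⁻¹ * b⁻¹ * (a⁻¹)⁻¹ * b⁻¹ * a := by rw [sq a]
      _ = b⁻¹ * a⁻¹ * b⁻¹ * (a * b⁻¹ * a) := by group
      _ = b⁻¹ * a⁻¹ * b⁻¹ * ((b⁻¹)⁻¹ * a⁻¹ * (b⁻¹)⁻¹) := by rw [key b⁻¹ a]
      _ = b⁻¹ * (a⁻¹ * a⁻¹) * b := by group
      _ = b⁻¹ * (a * a)⁻¹ * b := by group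
      _ = b⁻¹ * (a⁻¹)⁻¹ * b := by rw [sq a]
      _ = b⁻¹ * a * b := by group
  rw [L, R]

end Engel

/-- The total exponent of `x` in a word of the free group on `{x, y}`. -/
def expx (w : FreeGroup (Fin 2)) : ℤ :=
  Multiplicative.toAdd
    (FreeGroup.lift (fun i => Multiplicative.ofAdd (if i = 0 then (1 : ℤ) else 0)) w)

/-- The total exponent of `y` in a word of the free group on `{x, y}`. -/
def expy (w : FreeGroup (Fin 2)) : ℤ :=
  Multiplicative.toAdd
    (FreeGroup.lift (fun i => Multiplicative.ofAdd (if i = 1 then (1 : ℤ) else 0)) w)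

@[simp] lemma expx_one : expx 1 = 0 := by simp [expx]
@[simp] lemma expy_one : expy 1 = 0 := by simp [expy]
@[simp] lemma expx_mul (z z' : FreeGroup (Fin 2)) : expx (z * z') = expx z + expx z' := by
  simp [expx]
@[simp] lemma expy_mul (z z' : FreeGroup (Fin 2)) : expy (z * z') = expy z + expy z' := by
  simp [expy]
@[simp] lemma expx_inv (z : FreeGroup (Fin 2)) : expx z⁻¹ = -expx z := by simp [expx]
@[simp] lemma expy_inv (z : FreeGroup (Fin 2)) : expy z⁻¹ = -expy z := by simp [expy]
@[simp] lemma expx_of (i : Fin 2) : expx (FreeGroup.of i) = if i = 0 then 1 else 0 := by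
  simp [expx]
@[simp] lemma expy_of (i : Fin 2) : expy (FreeGroup.of i) = if i = 1 then 1 else 0 := by
  simp [expy]

section NF
variable {G : Type*} [Group G]

lemma normal_form (ψ : FreeGroup (Fin 2) →* G)
    (hX : Commute (ψ (FreeGroup.of 0)) ⁅ψ (FreeGroup.of 0), ψ (FreeGroup.of 1)⁆)
    (hY : Commute (ψ (FreeGroup.of 1)) ⁅ψ (FreeGroup.of 0), ψ (FreeGroup.of 1)⁆)
    (z : FreeGroup (Fin 2)) :
    ∃ m : ℤ, ψ z = ψ (FreeGroup.of 0) ^ (expx z) * ψ (FreeGroup.of 1) ^ (expy z) *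
      ⁅ψ (FreeGroup.of 0), ψ (FreeGroup.of 1)⁆ ^ m := by
  set X := ψ (FreeGroup.of 0) with hXdef
  set Y := ψ (FreeGroup.of 1) with hYdef
  set C := ⁅X, Y⁆ with hCdef
  have cX : ∀ (m i : ℤ), C ^ m * X ^ i = X ^ i * C ^ m :=
    fun m i => (((hX.zpow_right m).zpow_left i).eq).symm
  have cY : ∀ (m j : ℤ), C ^ m * Y ^ j = Y ^ j * C ^ m :=
    fun m j => (((hY.zpow_right m).zpow_left j).eq).symm
  have cXC : ∀ m : ℤ, C ^ m * X = X * C ^ m := fun m => ((hX.zpow_right m).eq).symm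
  have cYC : ∀ m : ℤ, C ^ m * Y = Y * C ^ m := fun m => ((hY.zpow_right m).eq).symm
  have swap0 : Y * X * Y⁻¹ = X * C ^ (-1 : ℤ) := by
    have h : Y * X * Y⁻¹ = C⁻¹ * X := by rw [hCdef, commutatorElement_def]; group
    rw [h, zpow_neg_one, (hX.inv_right.eq).symm]
  have hcy : Y⁻¹ * C * Y = C := by
    rw [show Y⁻¹ * C * Y = Y⁻¹ * (C * Y) from by group, ← hY.eq]; group
  have swap0' : Y⁻¹ * X * Y = X * C ^ (1 : ℤ) := by
    have h2 : Y⁻¹ * (Y * X * Y⁻¹) * Y = X := by group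
    rw [swap0] at h2
    calc Y⁻¹ * X * Y
        = (Y⁻¹ * (X * C ^ (-1:ℤ)) * Y) * (Y⁻¹ * (C ^ (-1:ℤ))⁻¹ * Y) := by group
      _ = X * (Y⁻¹ * (C ^ (-1:ℤ))⁻¹ * Y) := by rw [h2]
      _ = X * (Y⁻¹ * C * Y) := by rw [zpow_neg_one, inv_inv]
      _ = X * C ^ (1:ℤ) := by rw [hcy]; group
  have swapj : ∀ j : ℤ, Y ^ j * X * Y ^ (-j) = X * C ^ (-j) := by
    intro j
    induction j using Int.induction_on with
    | zero => simp
    | succ k ih =>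
        have h1 : Y ^ ((k:ℤ)+1) * X * Y ^ (-((k:ℤ)+1)) =
            Y * (Y ^ (k:ℤ) * X * Y ^ (-(k:ℤ))) * Y⁻¹ := by group
        have h2 : Y * C ^ (-(k:ℤ)) * Y⁻¹ = C ^ (-(k:ℤ)) := by rw [← cYC]; group
        rw [h1, ih,
          show Y * (X * C ^ (-(k:ℤ))) * Y⁻¹ = (Y * X * Y⁻¹) * (Y * C ^ (-(k:ℤ)) * Y⁻¹) from
            by group,
          swap0, h2]
        group
    | pred k ih =>
        simp only [neg_neg] at ih
        rw [show (-(-(k:ℤ)-1)) = (k:ℤ)+1 by ring]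
        have h1 : Y ^ (-(k:ℤ)-1) * X * Y ^ ((k:ℤ)+1) =
            Y⁻¹ * (Y ^ (-(k:ℤ)) * X * Y ^ ((k:ℤ))) * Y := by group
        have h2 : Y⁻¹ * (C ^ ((k:ℤ)) * Y) = C ^ ((k:ℤ)) := by rw [cYC]; group
        rw [h1, ih,
          show Y⁻¹ * (X * C ^ ((k:ℤ))) * Y = (Y⁻¹ * X * Y) * (Y⁻¹ * (C ^ ((k:ℤ)) * Y)) from
            by group,
          swap0', h2]
        group
  have swap : ∀ j i : ℤ, Y ^ j * X ^ i = X ^ i * C ^ (-(j * i)) * Y ^ j := by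
    intro j i
    have h1 : (Y ^ j * X * (Y ^ j)⁻¹) ^ i = Y ^ j * X ^ i * (Y ^ j)⁻¹ := by rw [conj_zpow]
    rw [show (Y ^ j)⁻¹ = Y ^ (-j) from by group, swapj j] at h1
    have h2 : (X * C ^ (-j)) ^ i = X ^ i * C ^ (-(j * i)) := by
      rw [(hX.zpow_right (-j)).mul_zpow, ← zpow_mul]
      ring_nf
    rw [h2] at h1
    calc Y ^ j * X ^ i = (Y ^ j * X ^ i * Y ^ (-j)) * Y ^ j := by group
      _ = X ^ i * C ^ (-(j * i)) * Y ^ j := by rw [h1]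
  -- main induction
  induction z using FreeGroup.induction_on with
  | C1 => exact ⟨0, by simp⟩
  | of i =>
      refine ⟨0, ?_⟩
      match i with
      | 0 => show X = X ^ (1:ℤ) * Y ^ (0:ℤ) * C ^ (0:ℤ); group
      | 1 => show Y = X ^ (0:ℤ) * Y ^ (1:ℤ) * C ^ (0:ℤ); group
  | inv_of i _ =>
      refine ⟨0, ?_⟩
      rw [map_inv]
      match i with
      | 0 => show X⁻¹ = X ^ (-1:ℤ) * Y ^ (0:ℤ) * C ^ (0:ℤ); group
      | 1 => show Y⁻¹ = X ^ (0:ℤ) * Y ^ (-1:ℤ) * C ^ (0:ℤ); group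
  | mul z z' ihz ihz' =>
      obtain ⟨m, hm⟩ := ihz
      obtain ⟨m', hm'⟩ := ihz'
      refine ⟨m + m' - expy z * expx z', ?_⟩
      rw [map_mul, hm, hm', expx_mul, expy_mul]
      calc X ^ expx z * Y ^ expy z * C ^ m * (X ^ expx z' * Y ^ expy z' * C ^ m')
          = X ^ expx z * (Y ^ expy z * X ^ expx z') * Y ^ expy z' * (C ^ m * C ^ m') := by
            rw [show X ^ expx z * Y ^ expy z * C ^ m * (X ^ expx z' * Y ^ expy z' * C ^ m')
                = X ^ expx z * Y ^ expy z * (C ^ m * X ^ expx z') * Y ^ expy z' * C ^ m' from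
                by group, cX m (expx z'),
              show X ^ expx z * Y ^ expy z * (X ^ expx z' * C ^ m) * Y ^ expy z' * C ^ m'
                = X ^ expx z * Y ^ expy z * X ^ expx z' * (C ^ m * Y ^ expy z') * C ^ m' from
                by group, cY m (expy z')]
            group
        _ = X ^ expx z * (X ^ expx z' * C ^ (-(expy z * expx z')) * Y ^ expy z) * Y ^ expy z' *
              (C ^ m * C ^ m') := by rw [swap (expy z) (expx z')]
        _ = X ^ expx z * X ^ expx z' * C ^ (-(expy z * expx z')) *
              (Y ^ expy z * Y ^ expy z') * (C ^ m * C ^ m') := by group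
        _ = X ^ (expx z + expx z') * (C ^ (-(expy z * expx z')) * Y ^ (expy z + expy z')) *
              (C ^ m * C ^ m') := by group
        _ = X ^ (expx z + expx z') * (Y ^ (expy z + expy z') * C ^ (-(expy z * expx z'))) *
              (C ^ m * C ^ m') := by rw [cY]
        _ = X ^ (expx z + expx z') * Y ^ (expy z + expy z') *
              C ^ (m + m' - expy z * expx z') := by group

end NF

namespace Stmt14

abbrev F2 := FreeGroup (Fin 2)

noncomputable def x : F2 := FreeGroup.of 0
noncomputable def y : F2 := FreeGroup.of 1
noncomputable def c : F2 := ⁅x, y⁆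

/-- the set of cubes -/
def S : Set F2 := {g | ∃ u : F2, u ^ 3 = g}

/-- the subgroup generated by cubes -/
def N : Subgroup F2 := Subgroup.closure S

instance : N.Normal := by
  constructor
  intro n hn g
  induction hn using Subgroup.closure_induction with
  | mem v hv =>
      obtain ⟨u, rfl⟩ := hv
      exact Subgroup.subset_closure ⟨g * u * g⁻¹, by rw [conj_pow]⟩
  | one => simpa using N.one_mem
  | mul v v' _ _ ihv ihv' =>
      have : g * (v * v') * g⁻¹ = (g * v * g⁻¹) * (g * v' * g⁻¹) := by group
      rw [this]; exact N.mul_mem ihv ihv'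
  | inv v _ ihv =>
      have : g * v⁻¹ * g⁻¹ = (g * v * g⁻¹)⁻¹ := by group
      rw [this]; exact N.inv_mem ihv

lemma cube_mem (u : F2) : u ^ 3 ∈ N := Subgroup.subset_closure ⟨u, rfl⟩

lemma zpow_mem_of_dvd {g : F2} {k : ℤ} (h : 3 ∣ k) : g ^ k ∈ N := by
  obtain ⟨t, rfl⟩ := h
  have : g ^ (3 * t) = (g ^ t) ^ (3 : ℕ) := by
    rw [← zpow_natCast (g ^ t) 3, ← zpow_mul]; ring_nf
  rw [this]
  exact cube_mem _

/-- the map to the integral Heisenberg group -/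
noncomputable def Φ : F2 →* Heis ℤ :=
  FreeGroup.lift (fun i => if i = 0 then ⟨1,0,0⟩ else ⟨0,1,0⟩)

@[simp] lemma Φ_x : Φ x = (⟨1,0,0⟩ : Heis ℤ) := by simp [Φ, x]
@[simp] lemma Φ_y : Φ y = (⟨0,1,0⟩ : Heis ℤ) := by simp [Φ, y]
lemma Φ_c : Φ c = (⟨0,0,1⟩ : Heis ℤ) := by
  rw [c, map_commutatorElement, Φ_x, Φ_y, Heis.commutator_XY]

/-- first coordinate projection -/
def pA : Heis ℤ →* Multiplicative ℤ where
  toFun g := Multiplicative.ofAdd g.a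
  map_one' := rfl
  map_mul' g h := by simp [← ofAdd_add]

/-- second coordinate projection -/
def pB : Heis ℤ →* Multiplicative ℤ where
  toFun g := Multiplicative.ofAdd g.b
  map_one' := rfl
  map_mul' g h := by simp [← ofAdd_add]

lemma Φ_a (v : F2) : (Φ v).a = expx v := by
  have h : pA.comp Φ =
      FreeGroup.lift (fun i => Multiplicative.ofAdd (if i = 0 then (1 : ℤ) else 0)) := by
    apply FreeGroup.ext_hom
    intro a
    match a with
    | 0 => simp [Φ, pA]
    | 1 => simp [Φ, pA]
  have h2 := DFunLike.congr_fun h v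
  simp only [MonoidHom.comp_apply] at h2
  rw [expx, ← h2]
  rfl

lemma Φ_b (v : F2) : (Φ v).b = expy v := by
  have h : pB.comp Φ =
      FreeGroup.lift (fun i => Multiplicative.ofAdd (if i = 1 then (1 : ℤ) else 0)) := by
    apply FreeGroup.ext_hom
    intro a
    match a with
    | 0 => simp [Φ, pB]
    | 1 => simp [Φ, pB]
  have h2 := DFunLike.congr_fun h v
  simp only [MonoidHom.comp_apply] at h2
  rw [expy, ← h2]
  rfl

/-- the map to the mod-3 Heisenberg group -/
noncomputable def φ : F2 →* Heis (ZMod 3) := Heis.toZMod3.comp Φ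

lemma N_le_ker : N ≤ φ.ker := by
  rw [N, Subgroup.closure_le]
  rintro v ⟨u, rfl⟩
  rw [SetLike.mem_coe, MonoidHom.mem_ker, map_pow, Heis.exponent3]

end Stmt14

namespace Stmt14

/-- computation of Φ on a normal-form word -/
lemma Φ_word (k l m : ℤ) : Φ (x ^ k * y ^ l * c ^ m) = ⟨k, l, k * l + m⟩ := by
  rw [map_mul, map_mul, map_zpow, map_zpow, map_zpow, Φ_x, Φ_y, Φ_c,
    Heis.X_zpow, Heis.Y_zpow, Heis.C_zpow]
  ext <;> simp

lemma φ_word_eq_one_iff (k l m : ℤ) :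
    φ (x ^ k * y ^ l * c ^ m) = 1 ↔ (3 ∣ k ∧ 3 ∣ l ∧ 3 ∣ m) := by
  rw [φ, MonoidHom.comp_apply, Φ_word]
  constructor
  · intro h
    have ha := congrArg Heis.a h
    have hb := congrArg Heis.b h
    have hc := congrArg Heis.c h
    simp [Heis.toZMod3] at ha hb hc
    rw [ZMod.intCast_zmod_eq_zero_iff_dvd] at ha hb
    have ha' : (3 : ℤ) ∣ k := by exact_mod_cast ha
    have hb' : (3 : ℤ) ∣ l := by exact_mod_cast hb
    have hc2 : ((k * l + m : ℤ) : ZMod 3) = 0 := by push_cast; linear_combination hc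
    rw [ZMod.intCast_zmod_eq_zero_iff_dvd] at hc2
    have hc' : (3 : ℤ) ∣ k * l + m := by exact_mod_cast hc2
    have hkl : (3 : ℤ) ∣ k * l := Dvd.dvd.mul_right ha' l
    exact ⟨ha', hb', by omega⟩
  · rintro ⟨hk, hl, hm⟩
    have hkl : (3 : ℤ) ∣ k * l := Dvd.dvd.mul_right hk l
    have h1 : (3 : ℤ) ∣ k * l + m := by omega
    have e1 : ((k : ZMod 3)) = 0 := by
      rw [ZMod.intCast_zmod_eq_zero_iff_dvd]; exact_mod_cast hk
    have e2 : ((l : ZMod 3)) = 0 := by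
      rw [ZMod.intCast_zmod_eq_zero_iff_dvd]; exact_mod_cast hl
    have e3 : ((k * l + m : ℤ) : ZMod 3) = 0 := by
      rw [ZMod.intCast_zmod_eq_zero_iff_dvd]; exact_mod_cast h1
    push_cast at e3
    ext <;> simp [Heis.toZMod3] <;> [exact e1; exact e2; linear_combination e3]

/-- every element of the kernel of φ is in N -/
lemma ker_le_N : φ.ker ≤ N := by
  intro z hz
  rw [MonoidHom.mem_ker] at hz
  -- work in the quotient
  have h3 : ∀ q : F2 ⧸ N, q ^ 3 = 1 := by
    intro q
    obtain ⟨g, rfl⟩ := QuotientGroup.mk'_surjective N q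
    rw [← map_pow, QuotientGroup.mk'_apply, QuotientGroup.eq_one_iff]
    exact cube_mem g
  have hXc : Commute ((QuotientGroup.mk' N) (FreeGroup.of 0))
      ⁅(QuotientGroup.mk' N) (FreeGroup.of 0), (QuotientGroup.mk' N) (FreeGroup.of 1)⁆ :=
    engel_exp3 h3 _ _
  have hYc : Commute ((QuotientGroup.mk' N) (FreeGroup.of 1))
      ⁅(QuotientGroup.mk' N) (FreeGroup.of 0), (QuotientGroup.mk' N) (FreeGroup.of 1)⁆ := by
    have h := (engel_exp3 h3 ((QuotientGroup.mk' N) (FreeGroup.of 1))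
      ((QuotientGroup.mk' N) (FreeGroup.of 0))).inv_right
    rwa [commutatorElement_inv] at h
  obtain ⟨m, hm⟩ := normal_form (QuotientGroup.mk' N) hXc hYc z
  -- turn into a congruence
  have hzw : (QuotientGroup.mk' N) z = (QuotientGroup.mk' N) (x ^ expx z * y ^ expy z * c ^ m) := by
    rw [hm, map_mul, map_mul, map_zpow, map_zpow, map_zpow, ← map_commutatorElement]
    rfl
  rw [QuotientGroup.mk'_apply, QuotientGroup.mk'_apply, QuotientGroup.eq] at hzw
  -- φ z = φ of the word
  have hφ : φ (x ^ expx z * y ^ expy z * c ^ m) = 1 := by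
    have h1 : φ (z⁻¹ * (x ^ expx z * y ^ expy z * c ^ m)) = 1 := N_le_ker hzw
    rw [map_mul, map_inv, hz] at h1
    simpa using h1
  rw [φ_word_eq_one_iff] at hφ
  obtain ⟨hk, hl, hm3⟩ := hφ
  have hword : x ^ expx z * y ^ expy z * c ^ m ∈ N :=
    N.mul_mem (N.mul_mem (zpow_mem_of_dvd hk) (zpow_mem_of_dvd hl)) (zpow_mem_of_dvd hm3)
  have hzinv : z⁻¹ ∈ N := by
    have h5 : z⁻¹ = (z⁻¹ * (x ^ expx z * y ^ expy z * c ^ m)) *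
        (x ^ expx z * y ^ expy z * c ^ m)⁻¹ := by group
    rw [h5]
    exact N.mul_mem hzw (N.inv_mem hword)
  simpa using N.inv_mem hzinv

lemma mem_N_iff (z : F2) : z ∈ N ↔ φ z = 1 :=
  ⟨fun h => N_le_ker h, fun h => ker_le_N h⟩

end Stmt14

namespace Stmt14

lemma exp_commutator {v : F2} (hv : v ∈ commutator F2) : expx v = 0 ∧ expy v = 0 := by
  have h1 : commutator F2 ≤ MonoidHom.ker (pA.comp Φ) := by
    rw [commutator_def, Subgroup.commutator_le]
    intro g₁ _ g₂ _
    rw [MonoidHom.mem_ker, map_commutatorElement]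
    exact commutatorElement_eq_one_iff_commute.2 (mul_comm _ _)
  have h2 : commutator F2 ≤ MonoidHom.ker (pB.comp Φ) := by
    rw [commutator_def, Subgroup.commutator_le]
    intro g₁ _ g₂ _
    rw [MonoidHom.mem_ker, map_commutatorElement]
    exact commutatorElement_eq_one_iff_commute.2 (mul_comm _ _)
  have e1 := h1 hv
  have e2 := h2 hv
  rw [MonoidHom.mem_ker] at e1 e2
  have e1' : Multiplicative.ofAdd (Φ v).a = Multiplicative.ofAdd (0 : ℤ) := e1
  have e2' : Multiplicative.ofAdd (Φ v).b = Multiplicative.ofAdd (0 : ℤ) := e2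
  rw [← Φ_a, ← Φ_b]
  exact ⟨Multiplicative.ofAdd.injective e1', Multiplicative.ofAdd.injective e2'⟩

lemma commutator_eq : commutator F2 = Subgroup.normalClosure {c} := by
  apply le_antisymm
  · -- commutator ≤ normal closure
    rw [commutator_def, Subgroup.commutator_le]
    intro g _ h _
    set K := Subgroup.normalClosure ({c} : Set F2) with hK
    have hc1 : (QuotientGroup.mk' K) c = 1 := by
      rw [QuotientGroup.mk'_apply, QuotientGroup.eq_one_iff]
      exact Subgroup.subset_normalClosure rfl
    have hC1 : ⁅(QuotientGroup.mk' K) (FreeGroup.of 0), (QuotientGroup.mk' K) (FreeGroup.of 1)⁆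
        = 1 := by
      rw [← map_commutatorElement]
      exact hc1
    have hXY : Commute ((QuotientGroup.mk' K) (FreeGroup.of 0))
        ((QuotientGroup.mk' K) (FreeGroup.of 1)) :=
      commutatorElement_eq_one_iff_commute.1 hC1
    have hXc : Commute ((QuotientGroup.mk' K) (FreeGroup.of 0))
        ⁅(QuotientGroup.mk' K) (FreeGroup.of 0), (QuotientGroup.mk' K) (FreeGroup.of 1)⁆ := by
      rw [hC1]; exact Commute.one_right _
    have hYc : Commute ((QuotientGroup.mk' K) (FreeGroup.of 1))
        ⁅(QuotientGroup.mk' K) (FreeGroup.of 0), (QuotientGroup.mk' K) (FreeGroup.of 1)⁆ := by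
      rw [hC1]; exact Commute.one_right _
    have hnf : ∀ v : F2, (QuotientGroup.mk' K) v =
        ((QuotientGroup.mk' K) (FreeGroup.of 0)) ^ expx v *
        ((QuotientGroup.mk' K) (FreeGroup.of 1)) ^ expy v := by
      intro v
      obtain ⟨m, hm⟩ := normal_form (QuotientGroup.mk' K) hXc hYc v
      rw [hm, hC1, one_zpow, mul_one]
    have hcomm : Commute ((QuotientGroup.mk' K) g) ((QuotientGroup.mk' K) h) := by
      rw [hnf g, hnf h]
      have c1 : Commute (((QuotientGroup.mk' K) (FreeGroup.of 0)) ^ expx g)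
          (((QuotientGroup.mk' K) (FreeGroup.of 0)) ^ expx h *
           ((QuotientGroup.mk' K) (FreeGroup.of 1)) ^ expy h) :=
        ((Commute.refl _).zpow_zpow _ _).mul_right (hXY.zpow_zpow _ _)
      have c2 : Commute (((QuotientGroup.mk' K) (FreeGroup.of 1)) ^ expy g)
          (((QuotientGroup.mk' K) (FreeGroup.of 0)) ^ expx h *
           ((QuotientGroup.mk' K) (FreeGroup.of 1)) ^ expy h) :=
        (hXY.symm.zpow_zpow _ _).mul_right ((Commute.refl _).zpow_zpow _ _)
      exact c1.mul_left c2
    have : (QuotientGroup.mk' K) ⁅g, h⁆ = 1 := by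
      rw [map_commutatorElement]
      exact commutatorElement_eq_one_iff_commute.2 hcomm
    rw [QuotientGroup.mk'_apply, QuotientGroup.eq_one_iff] at this
    exact this
  · -- normal closure ≤ commutator
    apply Subgroup.normalClosure_le_normal
    intro g hg
    rw [Set.mem_singleton_iff] at hg
    subst hg
    rw [SetLike.mem_coe, commutator_def]
    exact Subgroup.commutator_mem_commutator (Subgroup.mem_top x) (Subgroup.mem_top y)

end Stmt14

namespace Stmt14

lemma f_eq (f : ↥(commutator F2) →* Multiplicative ℤ)
    (hf : ∀ (u : F2) (w : ↥(commutator F2)),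
      (w : F2) = u * ⁅FreeGroup.of (0 : Fin 2), FreeGroup.of (1 : Fin 2)⁆ * u⁻¹ →
      f w = Multiplicative.ofAdd (1 : ℤ)) :
    ∀ w : ↥(commutator F2), f w = Multiplicative.ofAdd ((Φ (w : F2)).c) := by
  have hKc : commutator F2 = Subgroup.closure (Group.conjugatesOfSet ({c} : Set F2)) :=
    commutator_eq
  intro w
  obtain ⟨v, hv⟩ := w
  have hv' : v ∈ Subgroup.closure (Group.conjugatesOfSet ({c} : Set F2)) := hKc ▸ hv
  revert hv
  induction hv' using Subgroup.closure_induction with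
  | mem v hvc =>
      intro hv
      rw [Group.mem_conjugatesOfSet_iff] at hvc
      obtain ⟨a, ha, hconj⟩ := hvc
      rw [Set.mem_singleton_iff] at ha
      subst ha
      rw [isConj_iff] at hconj
      obtain ⟨u, hu⟩ := hconj
      have hΦ : Φ v = ⟨0, 0, 1⟩ := by
        rw [← hu, map_mul, map_mul, map_inv, Φ_c, Heis.conj_C]
      rw [hΦ]
      exact hf u ⟨v, hv⟩ hu.symm
  | one =>
      intro hv
      have : (⟨1, hv⟩ : ↥(commutator F2)) = 1 := Subtype.ext rfl
      rw [this, map_one]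
      show (1 : Multiplicative ℤ) = Multiplicative.ofAdd (Φ (1 : F2)).c
      rw [map_one]
      rfl
  | mul v v' hvc hv'c ih ih' =>
      intro hm
      have hv1 : v ∈ commutator F2 := hKc ▸ hvc
      have hv2 : v' ∈ commutator F2 := hKc ▸ hv'c
      have hmul : (⟨v * v', hm⟩ : ↥(commutator F2)) = ⟨v, hv1⟩ * ⟨v', hv2⟩ :=
        Subtype.ext rfl
      have ha0 : (Φ v).a = 0 := by rw [Φ_a]; exact (exp_commutator hv1).1
      rw [hmul, map_mul, ih hv1, ih' hv2]
      show Multiplicative.ofAdd (Φ v).c * Multiplicative.ofAdd (Φ v').c =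
        Multiplicative.ofAdd (Φ (v * v')).c
      rw [map_mul, Heis.mul_c, ha0, zero_mul, add_zero, ofAdd_add]
  | inv v hvc ih =>
      intro hm
      have hv1 : v ∈ commutator F2 := hKc ▸ hvc
      have hinv : (⟨v⁻¹, hm⟩ : ↥(commutator F2)) = (⟨v, hv1⟩ : ↥(commutator F2))⁻¹ :=
        Subtype.ext rfl
      have ha0 : (Φ v).a = 0 := by rw [Φ_a]; exact (exp_commutator hv1).1
      rw [hinv, map_inv, ih hv1]
      show (Multiplicative.ofAdd (Φ v).c)⁻¹ = Multiplicative.ofAdd (Φ v⁻¹).c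
      rw [map_inv, Heis.inv_c, ha0, zero_mul, add_zero, ofAdd_neg]

end Stmt14

namespace Stmt14

lemma prodcube_mem (L : List F2) : (L.map (fun u => u ^ 3)).prod ∈ N := by
  apply Subgroup.list_prod_mem
  intro g hg
  rw [List.mem_map] at hg
  obtain ⟨u, -, rfl⟩ := hg
  exact cube_mem u

lemma inv_cubeprod (L : List F2) :
    ((L.map (fun u => u ^ 3)).prod)⁻¹ =
      ((L.reverse.map (fun u => u⁻¹)).map (fun u => u ^ 3)).prod := by
  induction L with
  | nil => simp
  | cons a L ih => simp [mul_inv_rev, ih, inv_pow]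

lemma mem_N_list {z : F2} (hz : z ∈ N) : ∃ L : List F2, z = (L.map (fun u => u ^ 3)).prod := by
  induction hz using Subgroup.closure_induction with
  | mem v hv =>
      obtain ⟨u, rfl⟩ := hv
      exact ⟨[u], by simp⟩
  | one => exact ⟨[], by simp⟩
  | mul v v' _ _ ih ih' =>
      obtain ⟨L, rfl⟩ := ih
      obtain ⟨L', rfl⟩ := ih'
      exact ⟨L ++ L', by simp⟩
  | inv v _ ih =>
      obtain ⟨L, rfl⟩ := ih
      exact ⟨L.reverse.map (fun u => u⁻¹), inv_cubeprod L⟩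

end Stmt14

open Stmt14

theorem stmt_14
    (f : ↥(commutator (FreeGroup (Fin 2))) →* Multiplicative ℤ)
    (hf : ∀ (u : FreeGroup (Fin 2)) (w : ↥(commutator (FreeGroup (Fin 2)))),
      (w : FreeGroup (Fin 2)) =
          u * ⁅FreeGroup.of (0 : Fin 2), FreeGroup.of (1 : Fin 2)⁆ * u⁻¹ →
      f w = Multiplicative.ofAdd (1 : ℤ))
    (z : FreeGroup (Fin 2))
    (w : ↥(commutator (FreeGroup (Fin 2))))
    (hw : (w : FreeGroup (Fin 2)) =
      FreeGroup.of (1 : Fin 2) ^ (-(expy z)) * FreeGroup.of (0 : Fin 2) ^ (-(expx z)) * z) :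
    (∃ L : List (FreeGroup (Fin 2)), L ≠ [] ∧ z = (L.map (fun u => u ^ 3)).prod) ↔
      (3 ∣ expx z ∧ 3 ∣ expy z ∧ (3 : ℤ) ∣ Multiplicative.toAdd (f w)) := by
  have hfA := f_eq f hf
  set m := (Φ (w : F2)).c with hmdef
  have hwa : (Φ (w : F2)).a = 0 := by rw [Φ_a]; exact (exp_commutator w.2).1
  have hwb : (Φ (w : F2)).b = 0 := by rw [Φ_b]; exact (exp_commutator w.2).2
  have hΦw : Φ (w : F2) = ⟨0, 0, m⟩ := by
    ext
    · exact hwa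
    · exact hwb
    · rfl
  have hfw : Multiplicative.toAdd (f w) = m := by rw [hfA w]; rfl
  have hz_decomp : z = x ^ expx z * y ^ expy z * (w : F2) := by
    show z = FreeGroup.of 0 ^ expx z * FreeGroup.of 1 ^ expy z * (w : F2)
    rw [hw]; group
  have hΦz : Φ z = ⟨expx z, expy z, expx z * expy z + m⟩ := by
    have h := congrArg Φ hz_decomp
    rw [map_mul, map_mul, map_zpow, map_zpow, Φ_x, Φ_y, Heis.X_zpow, Heis.Y_zpow, hΦw] at h
    rw [h]
    ext <;> simp
  have key : z ∈ N ↔ (3 ∣ expx z ∧ 3 ∣ expy z ∧ (3 : ℤ) ∣ m) := by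
    rw [mem_N_iff]
    have h1 : φ z = φ (x ^ expx z * y ^ expy z * c ^ m) := by
      rw [φ, MonoidHom.comp_apply, MonoidHom.comp_apply, Φ_word, hΦz]
    rw [h1, φ_word_eq_one_iff]
  constructor
  · rintro ⟨L, -, hL⟩
    have hzN : z ∈ N := by rw [hL]; exact prodcube_mem L
    obtain ⟨h1, h2, h3⟩ := key.1 hzN
    exact ⟨h1, h2, by rw [hfw]; exact h3⟩
  · rintro ⟨h1, h2, h3⟩
    rw [hfw] at h3
    obtain ⟨L, hL⟩ := mem_N_list (key.2 ⟨h1, h2, h3⟩)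
    match L, hL with
    | [], hL => exact ⟨[1], by simp, by simpa using hL⟩
    | (a :: L'), hL => exact ⟨a :: L', by simp, hL⟩
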